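/- Case formula for the probability of the event (1,1): consider two variables j₁ and j₂ of the same block of the one-factor binary model with δ_{j₁} = 1, and let p₁₁ := ∫₀¹ p_{j₁}(u) p_{j₂}(u) du. Then: (i) if δ_{j₂} = 1 and α_{j₁} ≤ α_{j₂}, p₁₁ = α_{j₁}α_{j₂} + ε_{j₁}ε_{j₂}α_{j₁}(1−α_{j₂}); (ii) if δ_{j₂} = 0 and α_{j₁} + α_{j₂} < 1, p₁₁ = α_{j₁}α_{j₂} − ε_{j₁}ε_{j₂}α_{j₁}α_{j₂}; (iii) if δ_{j₂} = 0 and α_{j₁} + α_{j₂} ≥ 1, p₁₁ = α_{j₁}α_{j₂} − ε_{j₁}ε_{j₂}(1−α_{j₁})(1−α_{j₂}). -/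

import Mathlib

open MeasureTheory intervalIntegral Set

lemma step_piece (F : ℝ → ℝ) (l r C : ℝ) (hlr : l ≤ r)
    (h : ∀ u ∈ Set.Ioo l r, F u = C) :
    IntervalIntegrable F volume l r ∧ ∫ u in l..r, F u = (r - l) * C := by
  have hne : ∀ᵐ u : ℝ ∂volume, u ≠ r := by
    refine MeasureTheory.ae_iff.mpr ?_
    simpa using measure_singleton r
  have heq : ∀ᵐ u ∂(volume.restrict (Set.uIoc l r)), F u = C := by
    filter_upwards [MeasureTheory.ae_restrict_mem measurableSet_uIoc,
      MeasureTheory.ae_restrict_of_ae hne] with u hu hur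
    rw [Set.uIoc_of_le hlr] at hu
    exact h u ⟨hu.1, lt_of_le_of_ne hu.2 hur⟩
  constructor
  · exact (_root_.intervalIntegrable_const (c := C)).congr_ae
      (Filter.EventuallyEq.symm heq)
  · have : ∫ u in l..r, F u = ∫ _ in l..r, C :=
      intervalIntegral.integral_congr_ae (by
        filter_upwards [hne] with u hur hu
        rw [Set.uIoc_of_le hlr] at hu
        exact h u ⟨hu.1, lt_of_le_of_ne hu.2 hur⟩)
    rw [this, intervalIntegral.integral_const, smul_eq_mul]

lemma key (a b c d e f : ℝ) (h0 : 0 ≤ a) (hab : a ≤ b) (hb1 : b ≤ 1) :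
    (∫ u in (0:ℝ)..1, (if u < a then c else d) * (if u < b then e else f))
      = a * (c * e) + (b - a) * (d * e) + (1 - b) * (d * f) := by
  set F := fun u : ℝ => (if u < a then c else d) * (if u < b then e else f) with hF
  have h1 := step_piece F 0 a (c * e) h0 (fun u hu => by
    simp only [hF, if_pos hu.2, if_pos (hu.2.trans_le hab)])
  have h2 := step_piece F a b (d * e) hab (fun u hu => by
    simp only [hF, if_neg (not_lt.2 hu.1.le), if_pos hu.2])
  have h3 := step_piece F b 1 (d * f) hb1 (fun u hu => by
    simp only [hF, if_neg (not_lt.2 (hab.trans hu.1.le)), if_neg (not_lt.2 hu.1.le)])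
  have hsplit1 : (∫ u in (0:ℝ)..b, F u) = (∫ u in (0:ℝ)..a, F u) + ∫ u in a..b, F u :=
    (intervalIntegral.integral_add_adjacent_intervals h1.1 h2.1).symm
  have hsplit2 : (∫ u in (0:ℝ)..1, F u) = (∫ u in (0:ℝ)..b, F u) + ∫ u in b..1, F u :=
    (intervalIntegral.integral_add_adjacent_intervals (h1.1.trans h2.1) h3.1).symm
  calc (∫ u in (0:ℝ)..1, F u) = _ := hsplit2
    _ = _ := by rw [hsplit1, h1.2, h2.2, h3.2]; ring

lemma key' (a b c d e f : ℝ) (h0 : 0 ≤ a) (hab : a ≤ b) (hb1 : b ≤ 1) :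
    (∫ u in (0:ℝ)..1, (if u < b then e else f) * (if u < a then c else d))
      = a * (c * e) + (b - a) * (d * e) + (1 - b) * (d * f) := by
  rw [← key a b c d e f h0 hab hb1]
  exact intervalIntegral.integral_congr (fun u _ => mul_comm _ _)

/-- **Case formula for the probability of the event `(1,1)`.**
For two variables of the same block of the one-factor binary model with `δ₁ = 1` and
`p₁₁ = ∫₀¹ p₁(u) p₂(u) du`:
(i) if `δ₂ = 1` and `α₁ ≤ α₂`, then `p₁₁ = α₁α₂ + ε₁ε₂α₁(1-α₂)`;
(ii) if `δ₂ = 0` and `α₁ + α₂ < 1`, then `p₁₁ = α₁α₂ - ε₁ε₂α₁α₂`;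
(iii) if `δ₂ = 0` and `α₁ + α₂ ≥ 1`, then `p₁₁ = α₁α₂ - ε₁ε₂(1-α₁)(1-α₂)`. -/
theorem prob_one_one_cases
    (α1 ε1 δ1 α2 ε2 δ2 β1 β2 lam1 ν1 lam2 ν2 p11 : ℝ)
    (hα1 : α1 ∈ Set.Ioo (0:ℝ) 1) (hα2 : α2 ∈ Set.Ioo (0:ℝ) 1)
    (hε1 : ε1 ∈ Set.Ioo (0:ℝ) 1) (hε2 : ε2 ∈ Set.Ioo (0:ℝ) 1)
    (hδ1 : δ1 = 1) (hδ2 : δ2 = 0 ∨ δ2 = 1)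
    (hβ1 : β1 = if δ1 = 1 then α1 else 1 - α1)
    (hβ2 : β2 = if δ2 = 1 then α2 else 1 - α2)
    (hlam1 : lam1 = (1 - ε1) * α1 + ε1 * δ1) (hν1 : ν1 = (1 - ε1) * α1 + ε1 * (1 - δ1))
    (hlam2 : lam2 = (1 - ε2) * α2 + ε2 * δ2) (hν2 : ν2 = (1 - ε2) * α2 + ε2 * (1 - δ2))
    (hp11 : p11 = ∫ u in (0:ℝ)..1,
      (if u < β1 then lam1 else ν1) * (if u < β2 then lam2 else ν2)) :
    (δ2 = 1 → α1 ≤ α2 → p11 = α1 * α2 + ε1 * ε2 * α1 * (1 - α2)) ∧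
    (δ2 = 0 → α1 + α2 < 1 → p11 = α1 * α2 - ε1 * ε2 * α1 * α2) ∧
    (δ2 = 0 → 1 ≤ α1 + α2 → p11 = α1 * α2 - ε1 * ε2 * (1 - α1) * (1 - α2)) := by
  subst hδ1
  rw [if_pos rfl] at hβ1
  rw [hβ1] at hp11
  obtain ⟨ha10, ha11⟩ := hα1
  obtain ⟨ha20, ha21⟩ := hα2
  refine ⟨?_, ?_, ?_⟩
  · intro h2 hle
    subst h2
    rw [if_pos rfl] at hβ2
    rw [hβ2] at hp11
    rw [hp11, key α1 α2 lam1 ν1 lam2 ν2 ha10.le hle ha21.le,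
      hlam1, hν1, hlam2, hν2]
    ring
  · intro h2 hlt
    subst h2
    rw [if_neg (by norm_num)] at hβ2
    rw [hβ2] at hp11
    rw [hp11, key α1 (1 - α2) lam1 ν1 lam2 ν2 ha10.le (by linarith) (by linarith),
      hlam1, hν1, hlam2, hν2]
    ring
  · intro h2 hge
    subst h2
    rw [if_neg (by norm_num)] at hβ2
    rw [hβ2] at hp11
    rw [hp11, key' (1 - α2) α1 lam2 ν2 lam1 ν1 (by linarith) (by linarith) ha11.le,
      hlam1, hν1, hlam2, hν2]
    ring
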